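/- Let A be an infinite set, let l be a natural number, let P : Fin l → Set A, and let c be a function assigning to every nonempty subset S of A an element c(S) ∈ S. Then there exist a bijection e : A ≃ A such that for every i and every x ∈ A, x ∈ P i ↔ e x ∈ P i, and a nonempty subset S of A such that c(e '' S) ≠ e(c(S)). In other words, no choice function on the nonempty subsets of an infinite set is invariant under all permutations preserving finitely many given unary predicates. -/
import Mathlib


/-- No choice function on the nonempty subsets of an infinite set is invariant under all
permutations preserving finitely many given unary predicates. -/
theorem no_invariant_choice_of_infinite {A : Type*} [Infinite A] (l : ℕ)
    (P : Fin l → Set A) (c : Set A → A) (hc : ∀ S : Set A, S.Nonempty → c S ∈ S) :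
    ∃ e : A ≃ A, (∀ (i : Fin l) (x : A), x ∈ P i ↔ e x ∈ P i) ∧
      ∃ S : Set A, S.Nonempty ∧ c (e '' S) ≠ e (c S) := by
  classical
  -- pigeonhole: two points with the same membership pattern
  obtain ⟨a, b, hab, hfab⟩ := Finite.exists_ne_map_eq_of_infinite
    (fun x : A => fun i : Fin l => (x ∈ P i : Prop))
  have hsame : ∀ i : Fin l, a ∈ P i ↔ b ∈ P i := by
    intro i
    have := congrFun hfab i
    simp only [eq_iff_iff] at this
    exact this
  refine ⟨Equiv.swap a b, ?_, {a, b}, ⟨a, by simp⟩, ?_⟩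
  · intro i x
    rcases eq_or_ne x a with rfl | hxa
    · rw [Equiv.swap_apply_left]; exact hsame i
    rcases eq_or_ne x b with rfl | hxb
    · rw [Equiv.swap_apply_right]; exact (hsame i).symm
    · rw [Equiv.swap_apply_of_ne_of_ne hxa hxb]
  · have himg : (Equiv.swap a b) '' {a, b} = {a, b} := by
      ext x
      simp [Set.image_insert_eq, Set.image_singleton, Equiv.swap_apply_left,
        Equiv.swap_apply_right, Set.pair_comm]
    rw [himg]
    have hmem := hc {a, b} ⟨a, by simp⟩
    rcases hmem with h | h
    · rw [h, Equiv.swap_apply_left]; exact hab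
    · simp only [Set.mem_singleton_iff] at h
      rw [h, Equiv.swap_apply_right]; exact hab.symm
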